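/- For every broadcasted party-list election E = (N, C, k, l, A, L) with parties P_1, …, P_g whose popularities are strictly decreasing (n_1 > n_2 > … > n_g) and in which every party has at least l candidates (|P_i| ≥ l for all i), and for every winning committee W ∈ LV(E), it holds that s_CC(A, W) ≥ (⌈k/l⌉ / k) · max_{W' ⊆ C, |W'| = k} s_CC(A, W'). -/

import Mathlib

open Finset

/-- An election `E = (N, C, k, l, A, L)`: voters form the finite type `V`,
candidates the finite type `C`, `k` is the committee size, `l` the ballot limit,
`A i` is the approval set of voter `i` and `L i` their ballot. -/
structure Election (V C : Type*) [Fintype V] [DecidableEq V] [Fintype C] [DecidableEq C] where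
  k : ℕ
  l : ℕ
  A : V → Finset C
  L : V → Finset C
  k_le_card : k ≤ Fintype.card C
  one_le_l : 1 ≤ l
  l_le_k : l ≤ k
  ballot_card : ∀ i, (L i).card = l
  ballot_sub_approval : ∀ i, l ≤ (A i).card → L i ⊆ A i
  approval_ssub_ballot : ∀ i, (A i).card < l → A i ⊂ L i

variable {V C : Type*} [Fintype V] [DecidableEq V] [Fintype C] [DecidableEq C]

/-- The LV-score of a candidate: the number of voters whose ballot contains it. -/
def sLVc (E : Election V C) (c : C) : ℕ := (univ.filter fun i => c ∈ E.L i).card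

/-- The AV-score of a candidate: the number of voters approving it. -/
def sAVc (E : Election V C) (c : C) : ℕ := (univ.filter fun i => c ∈ E.A i).card

/-- The LV-score of a committee. -/
def sLV (E : Election V C) (W : Finset C) : ℕ := ∑ c ∈ W, sLVc E c

/-- The AV-score of a committee. -/
def sAV (E : Election V C) (W : Finset C) : ℕ := ∑ c ∈ W, sAVc E c

/-- The winning committees of Limited Voting: size-`k` committees maximizing the LV-score. -/
def LVwin (E : Election V C) : Set (Finset C) :=
  {W | W.card = E.k ∧ ∀ W' : Finset C, W'.card = E.k → sLV E W' ≤ sLV E W}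

/-- The winning committees of Approval Voting: size-`k` committees maximizing the AV-score. -/
def AVwin (E : Election V C) : Set (Finset C) :=
  {W | W.card = E.k ∧ ∀ W' : Finset C, W'.card = E.k → sAV E W' ≤ sAV E W}

/-- The Chamberlin–Courant score of a committee: the number of represented voters. -/
def sCC (E : Election V C) (W : Finset C) : ℕ :=
  (univ.filter fun i => (W ∩ E.A i).Nonempty).card

/-- `A` is a party-list profile: approval sets are nonempty and pairwise equal or disjoint. -/
def PartyList (E : Election V C) : Prop :=
  (∀ i, (E.A i).Nonempty) ∧ ∀ i j : V, E.A i = E.A j ∨ E.A i ∩ E.A j = ∅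

/-- `E` is consistent with some broadcasting (linear) order on candidates, encoded by an
injective priority function `f` (`f c < f c'` meaning `c ≻ c'`). -/
def Broadcasted (E : Election V C) : Prop :=
  ∃ f : C → ℕ, Function.Injective f ∧
    ∀ (i : V) (c c' : C), c ∈ E.A i → c' ∈ E.A i → c ∈ E.L i → c' ∉ E.L i → f c < f c'

/-- The number of voters of party `Pj`. -/
def nParty (E : Election V C) (Pj : Finset C) : ℕ := (univ.filter fun i => E.A i = Pj).card


lemma aux_sum_finset_le (a : ℕ → ℕ) (ha : ∀ i j : ℕ, i ≤ j → a j ≤ a i) (T : Finset ℕ) :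
    ∑ j ∈ T, a j ≤ ∑ i ∈ Finset.range T.card, a i := by
  obtain ⟨n, hn⟩ : ∃ n, T.card = n := ⟨_, rfl⟩
  rw [hn]
  induction n generalizing T with
  | zero => rw [Finset.card_eq_zero.mp hn]; simp
  | succ n ih =>
    have hne : T.Nonempty := Finset.card_pos.mp (by omega)
    set x := T.max' hne with hxdef
    have hx : x ∈ T := T.max'_mem hne
    have hxe : (T.erase x).card = n := by rw [Finset.card_erase_of_mem hx, hn]; omega
    have hxn : n ≤ x := by
      have hsub : T ⊆ Finset.range (x+1) :=
        fun y hy => Finset.mem_range.mpr (Nat.lt_succ_of_le (Finset.le_max' T y hy))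
      have := Finset.card_le_card hsub
      rw [Finset.card_range] at this; omega
    calc ∑ j ∈ T, a j = a x + ∑ j ∈ T.erase x, a j := (Finset.add_sum_erase _ _ hx).symm
      _ ≤ a n + ∑ i ∈ Finset.range n, a i := Nat.add_le_add (ha n x hxn) (ih _ hxe)
      _ = ∑ i ∈ Finset.range (n+1), a i := by rw [Finset.sum_range_succ, Nat.add_comm]

lemma aux_cheb (a : ℕ → ℕ) (ha : ∀ i j : ℕ, i ≤ j → a j ≤ a i) (m M : ℕ) (h : m ≤ M) :
    m * ∑ i ∈ Finset.range M, a i ≤ M * ∑ i ∈ Finset.range m, a i := by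
  have hsplit : ∑ i ∈ Finset.range M, a i
      = ∑ i ∈ Finset.range m, a i + ∑ i ∈ Finset.Ico m M, a i := by
    rw [Finset.range_eq_Ico, ← Finset.sum_Ico_consecutive _ (Nat.zero_le m) h,
      ← Finset.range_eq_Ico]
  have hbound : ∀ i ∈ Finset.Ico m M, m * a i ≤ ∑ j ∈ Finset.range m, a j := by
    intro i hi
    have him : m ≤ i := (Finset.mem_Ico.mp hi).1
    calc m * a i = ∑ _j ∈ Finset.range m, a i := by
          rw [Finset.sum_const, Finset.card_range, smul_eq_mul]
      _ ≤ ∑ j ∈ Finset.range m, a j :=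
          Finset.sum_le_sum (fun j hj => ha j i (le_trans (le_of_lt (Finset.mem_range.mp hj)) him))
  calc m * ∑ i ∈ Finset.range M, a i
      = m * ∑ i ∈ Finset.range m, a i + ∑ i ∈ Finset.Ico m M, m * a i := by
        rw [hsplit, Nat.mul_add]; congr 1; exact Finset.mul_sum _ _ _
    _ ≤ m * ∑ i ∈ Finset.range m, a i + ∑ _i ∈ Finset.Ico m M, ∑ j ∈ Finset.range m, a j :=
        Nat.add_le_add_left (Finset.sum_le_sum hbound) _
    _ = m * ∑ i ∈ Finset.range m, a i + (M - m) * ∑ j ∈ Finset.range m, a j := by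
        rw [Finset.sum_const, Nat.card_Ico, smul_eq_mul]
    _ = M * ∑ i ∈ Finset.range m, a i := by
        rw [← Nat.add_mul, Nat.add_sub_cancel' h]

/-- In every broadcasted party-list election with strictly decreasing party
popularities where every party has at least `l` candidates, every LV-winning committee
`W` satisfies `s_CC(A, W) ≥ (⌈k/l⌉ / k) · max_{|W'| = k} s_CC(A, W')`. -/
theorem stmt6 (E : Election V C) (hPL : PartyList E) (hB : Broadcasted E)
    (g : ℕ) (P : Fin g → Finset C)
    (hPall : ∀ i : V, ∃ j, E.A i = P j)
    (hPrep : ∀ j, ∃ i : V, E.A i = P j)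
    (hanti : ∀ j j' : Fin g, j < j' → nParty E (P j') < nParty E (P j))
    (hPl : ∀ j, E.l ≤ (P j).card) :
    ∀ W ∈ LVwin E, ∀ Wmax : Finset C, Wmax.card = E.k →
      (∀ W' : Finset C, W'.card = E.k → sCC E W' ≤ sCC E Wmax) →
      (((E.k + E.l - 1) / E.l : ℕ) : ℚ) / (E.k : ℚ) * (sCC E Wmax : ℚ) ≤ (sCC E W : ℚ) := by
  classical
  -- basic setup
  intro W hW Wmax hWmaxcard hWmaxopt
  obtain ⟨hWk, hWopt⟩ := hW
  have hl1 : 1 ≤ E.l := E.one_le_l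
  have hk1 : 1 ≤ E.k := le_trans hl1 E.l_le_k
  set t : ℕ := (E.k + E.l - 1) / E.l with htdef
  obtain ⟨d, hd⟩ : ∃ d, (E.k - 1) / E.l = d := ⟨_, rfl⟩
  have hd1 : d ≤ E.k - 1 := hd ▸ Nat.div_le_self _ _
  have hd2 : d * E.l ≤ E.k - 1 := hd ▸ Nat.div_mul_le_self _ _
  have ht' : t = d + 1 := by
    rw [htdef]
    have h1 : E.k + E.l - 1 = (E.k - 1) + E.l := by omega
    rw [h1, Nat.add_div_right _ (by omega : 0 < E.l), hd]
  have ht1 : 1 ≤ t := by omega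
  have htk : t ≤ E.k := by omega
  have htl : (t - 1) * E.l ≤ E.k - 1 := by
    have h2 : t - 1 = d := by omega
    rw [h2]
    exact hd2
  -- every approval set has at least l candidates
  have hAl : ∀ i : V, E.l ≤ (E.A i).card := by
    intro i; obtain ⟨j, hj⟩ := hPall i; rw [hj]; exact hPl j
  have hLsub : ∀ i, E.L i ⊆ E.A i := fun i => E.ballot_sub_approval i (hAl i)
  -- same approval set implies same ballot
  have hballot_eq : ∀ i i' : V, E.A i = E.A i' → E.L i = E.L i' := by
    intro i i' hA
    by_contra hne
    obtain ⟨f, _, hford⟩ := hB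
    have h1 : ¬ E.L i ⊆ E.L i' := fun h =>
      hne (Finset.eq_of_subset_of_card_le h (by rw [E.ballot_card, E.ballot_card]))
    have h2 : ¬ E.L i' ⊆ E.L i := fun h =>
      hne (Finset.eq_of_subset_of_card_le h (by rw [E.ballot_card, E.ballot_card])).symm
    obtain ⟨c, hc, hc'⟩ := Finset.not_subset.mp h1
    obtain ⟨c', hc'1, hc'2⟩ := Finset.not_subset.mp h2
    have hcA : c ∈ E.A i := hLsub i hc
    have hc'A : c' ∈ E.A i := hA ▸ hLsub i' hc'1
    have k1 := hford i c c' hcA hc'A hc hc'2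
    have k2 := hford i' c' c (hA ▸ hc'A) (hA ▸ hcA) hc'1 hc'
    omega
  -- parties are distinct and disjoint
  have hPne : ∀ j j' : Fin g, j ≠ j' → P j ≠ P j' := by
    intro j j' hne heq
    rcases lt_or_gt_of_ne hne with h | h
    · have := hanti j j' h; rw [heq] at this; omega
    · have := hanti j' j h; rw [heq] at this; omega
  have hPdisj : ∀ j j' : Fin g, j ≠ j' → ∀ c : C, c ∈ P j → c ∈ P j' → False := by
    intro j j' hne c hc hc'
    obtain ⟨i, hi⟩ := hPrep j
    obtain ⟨i', hi'⟩ := hPrep j'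
    rcases hPL.2 i i' with h | h
    · exact hPne j j' hne (by rw [← hi, ← hi', h])
    · rw [hi, hi'] at h
      have : c ∈ P j ∩ P j' := Finset.mem_inter.mpr ⟨hc, hc'⟩
      rw [h] at this
      exact absurd this (Finset.notMem_empty c)
  -- representative voters and party ballots
  choose v hv using hPrep
  have hBP : ∀ j : Fin g, E.L (v j) ⊆ P j := fun j => (hv j) ▸ hLsub (v j)
  have hBcard : ∀ j : Fin g, (E.L (v j)).card = E.l := fun j => E.ballot_card _
  have hLiB : ∀ (i : V) (j : Fin g), E.A i = P j → E.L i = E.L (v j) :=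
    fun i j h => hballot_eq i (v j) (h.trans (hv j).symm)
  have hn0 : ∀ j : Fin g, 0 < nParty E (P j) := by
    intro j
    exact Finset.card_pos.mpr ⟨v j, Finset.mem_filter.mpr ⟨Finset.mem_univ _, hv j⟩⟩
  -- LV score of ballot members
  have hscore : ∀ (j : Fin g) (c : C), c ∈ E.L (v j) → sLVc E c = nParty E (P j) := by
    intro j c hc
    unfold sLVc nParty
    congr 1
    ext i
    simp only [Finset.mem_filter, Finset.mem_univ, true_and]
    constructor
    · intro hcL
      obtain ⟨j', hj'⟩ := hPall i
      have hcB : c ∈ E.L (v j') := (hLiB i j' hj') ▸ hcL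
      have hcPj' : c ∈ P j' := hBP j' hcB
      have hcPj : c ∈ P j := hBP j hc
      by_cases hjj : j' = j
      · exact hjj ▸ hj'
      · exact absurd hcPj' (fun h => hPdisj j' j hjj c h hcPj)
    · intro hi
      rw [hLiB i j hi]
      exact hc
  -- CC score decomposition into parties
  have hCC : ∀ Wc : Finset C, sCC E Wc
      = ∑ j ∈ univ.filter (fun j : Fin g => (Wc ∩ P j).Nonempty), nParty E (P j) := by
    intro Wc
    unfold sCC nParty
    have hset : (univ.filter fun i : V => (Wc ∩ E.A i).Nonempty)
        = (univ.filter fun j : Fin g => (Wc ∩ P j).Nonempty).biUnion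
            (fun j => univ.filter fun i : V => E.A i = P j) := by
      ext i
      simp only [Finset.mem_filter, Finset.mem_univ, true_and, Finset.mem_biUnion]
      constructor
      · intro h
        obtain ⟨j, hj⟩ := hPall i
        have h2 : (Wc ∩ P j).Nonempty := by rw [← hj]; exact h
        exact ⟨j, h2, hj⟩
      · rintro ⟨j, hj, hij⟩
        rw [hij]
        exact hj
    rw [hset, Finset.card_biUnion]
    intro j hj j' hj' hne
    rw [Function.onFun, Finset.disjoint_left]
    intro i h1 h2
    exact hPne j j' hne ((Finset.mem_filter.mp h1).2.symm.trans (Finset.mem_filter.mp h2).2)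
  -- Claim A: the LV winner covers the top min(g, t) parties
  have hA : ∀ j : Fin g, (j : ℕ) < t → (W ∩ P j).Nonempty := by
    intro j hjt
    by_contra hemp
    rw [Finset.not_nonempty_iff_eq_empty] at hemp
    set S := W.filter (fun c => nParty E (P j) ≤ sLVc E c) with hSdef
    have hSsub : S ⊆ (univ.filter fun j' : Fin g => j' < j).biUnion (fun j' => E.L (v j')) := by
      intro c hc
      obtain ⟨hcW, hcs⟩ := Finset.mem_filter.mp hc
      have hpos : 0 < sLVc E c := lt_of_lt_of_le (hn0 j) hcs
      obtain ⟨i, hi⟩ := Finset.card_pos.mp hpos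
      have hiL : c ∈ E.L i := (Finset.mem_filter.mp hi).2
      obtain ⟨j', hj'⟩ := hPall i
      have hcB : c ∈ E.L (v j') := (hLiB i j' hj') ▸ hiL
      have hsc : sLVc E c = nParty E (P j') := hscore j' c hcB
      have hle : ¬ j < j' := by
        intro h
        have := hanti j j' h
        omega
      have hnej : j' ≠ j := by
        rintro rfl
        have : c ∈ W ∩ P j' := Finset.mem_inter.mpr ⟨hcW, hBP j' hcB⟩
        rw [hemp] at this
        exact absurd this (Finset.notMem_empty c)
      have hlt : j' < j := lt_of_le_of_ne (not_lt.mp hle) hnej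
      exact Finset.mem_biUnion.mpr ⟨j', Finset.mem_filter.mpr ⟨Finset.mem_univ _, hlt⟩, hcB⟩
    have hfiltcard : (univ.filter (fun j' : Fin g => j' < j)).card ≤ (j : ℕ) := by
      have h1 : (univ.filter (fun j' : Fin g => j' < j)).card
          ≤ (Finset.range (j : ℕ)).card := by
        apply Finset.card_le_card_of_injOn Fin.val
        · intro x hx
          exact Finset.mem_range.mpr (Finset.mem_filter.mp hx).2
        · exact Function.Injective.injOn Fin.val_injective
      rwa [Finset.card_range] at h1
    have hScard : S.card < E.k := by
      have h1 : S.card ≤ ∑ j' ∈ univ.filter (fun j' : Fin g => j' < j), (E.L (v j')).card :=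
        le_trans (Finset.card_le_card hSsub) Finset.card_biUnion_le
      have h2 : ∑ j' ∈ univ.filter (fun j' : Fin g => j' < j), (E.L (v j')).card
          = (univ.filter (fun j' : Fin g => j' < j)).card * E.l := by
        rw [Finset.sum_congr rfl (fun x _ => hBcard x), Finset.sum_const, smul_eq_mul]
      have h3 : (j : ℕ) * E.l ≤ (t - 1) * E.l := Nat.mul_le_mul_right _ (by omega)
      have h4 : (univ.filter (fun j' : Fin g => j' < j)).card * E.l ≤ (j : ℕ) * E.l :=
        Nat.mul_le_mul_right _ hfiltcard
      omega
    have hWS : ¬ W ⊆ S := by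
      intro h
      have := Finset.card_le_card h
      omega
    obtain ⟨c, hcW, hcS⟩ := Finset.not_subset.mp hWS
    have hclt : sLVc E c < nParty E (P j) := by
      by_contra h
      exact hcS (Finset.mem_filter.mpr ⟨hcW, not_lt.mp h⟩)
    obtain ⟨b, hb⟩ := Finset.card_pos.mp (show 0 < (E.L (v j)).card by rw [hBcard]; omega)
    have hbP : b ∈ P j := hBP j hb
    have hbW : b ∉ W := by
      intro h
      have : b ∈ W ∩ P j := Finset.mem_inter.mpr ⟨h, hbP⟩
      rw [hemp] at this
      exact absurd this (Finset.notMem_empty b)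
    have hbne : b ∉ W.erase c := fun h => hbW (Finset.mem_of_mem_erase h)
    have hW'card : (insert b (W.erase c)).card = E.k := by
      rw [Finset.card_insert_of_notMem hbne, Finset.card_erase_of_mem hcW, hWk]
      omega
    have hsb : sLVc E b = nParty E (P j) := hscore j b hb
    have h1 : sLV E W = sLVc E c + sLV E (W.erase c) := by
      unfold sLV
      rw [← Finset.add_sum_erase _ _ hcW]
    have h2 : sLV E (insert b (W.erase c)) = sLVc E b + sLV E (W.erase c) := by
      unfold sLV
      rw [Finset.sum_insert hbne]
    have := hWopt _ hW'card
    omega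
  -- the sequence of party sizes
  set nseq : ℕ → ℕ := fun i => if h : i < g then nParty E (P ⟨i, h⟩) else 0 with hnseqdef
  have hnseq_anti : ∀ i j : ℕ, i ≤ j → nseq j ≤ nseq i := by
    intro i j hij
    by_cases hj : j < g
    · have hi : i < g := lt_of_le_of_lt hij hj
      simp only [hnseqdef]
      rw [dif_pos hj, dif_pos hi]
      rcases eq_or_lt_of_le hij with h | h
      · subst h; exact le_refl _
      · exact (hanti ⟨i, hi⟩ ⟨j, hj⟩ (Fin.mk_lt_mk.mpr h)).le
    · simp only [hnseqdef]
      rw [dif_neg hj]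
      exact Nat.zero_le _
  have hrange : ∀ r : ℕ, r ≤ g →
      ∑ i ∈ Finset.range r, nseq i
        = ∑ j ∈ univ.filter (fun j : Fin g => (j : ℕ) < r), nParty E (P j) := by
    intro r hr
    refine Finset.sum_bij' (fun (i : ℕ) (hi : i ∈ Finset.range r) =>
        (⟨i, lt_of_lt_of_le (Finset.mem_range.mp hi) hr⟩ : Fin g))
      (fun (j : Fin g) (_ : j ∈ univ.filter (fun j : Fin g => (j : ℕ) < r)) => (j : ℕ))
      ?_ ?_ ?_ ?_ ?_
    · intro i hi
      exact Finset.mem_filter.mpr ⟨Finset.mem_univ _, Finset.mem_range.mp hi⟩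
    · intro j hj
      exact Finset.mem_range.mpr (Finset.mem_filter.mp hj).2
    · intro i hi; rfl
    · intro j hj; rfl
    · intro i hi
      simp only [hnseqdef]
      rw [dif_pos (lt_of_lt_of_le (Finset.mem_range.mp hi) hr)]
  set m : ℕ := min g t with hmdef
  set M : ℕ := min g E.k with hMdef
  -- lower bound for sCC E W
  have hlow : ∑ i ∈ Finset.range m, nseq i ≤ sCC E W := by
    rw [hCC W, hrange m (min_le_left _ _)]
    apply Finset.sum_le_sum_of_subset
    intro j hj
    have hjm : (j : ℕ) < m := (Finset.mem_filter.mp hj).2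
    exact Finset.mem_filter.mpr ⟨Finset.mem_univ _,
      hA j (lt_of_lt_of_le hjm (min_le_right _ _))⟩
  -- upper bound for sCC E Wmax
  have hCnonempty : Nonempty C := by
    have := E.k_le_card
    exact Fintype.card_pos_iff.mp (by omega)
  have hup : sCC E Wmax ≤ ∑ i ∈ Finset.range M, nseq i := by
    rw [hCC Wmax]
    set T' := univ.filter (fun j : Fin g => (Wmax ∩ P j).Nonempty) with hT'def
    have hT'k : T'.card ≤ E.k := by
      rw [← hWmaxcard]
      apply Finset.card_le_card_of_injOn
        (fun j => if h : (Wmax ∩ P j).Nonempty then h.choose else Classical.arbitrary C)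
      · intro j hj
        have h := (Finset.mem_filter.mp hj).2
        simp only [dif_pos h]
        exact (Finset.mem_inter.mp h.choose_spec).1
      · intro j hj j' hj' heq
        have h := (Finset.mem_filter.mp hj).2
        have h' := (Finset.mem_filter.mp hj').2
        simp only [dif_pos h, dif_pos h'] at heq
        by_contra hne
        exact hPdisj j j' hne _ (Finset.mem_inter.mp h.choose_spec).2
          (heq ▸ (Finset.mem_inter.mp h'.choose_spec).2)
    have hT'g : T'.card ≤ g := by
      have := Finset.card_le_card (Finset.subset_univ T')
      rwa [Finset.card_univ, Fintype.card_fin] at this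
    have himg : ∑ j ∈ T', nParty E (P j) = ∑ x ∈ T'.image Fin.val, nseq x := by
      rw [Finset.sum_image (fun a _ b _ h => Fin.val_injective h)]
      apply Finset.sum_congr rfl
      intro j _
      simp only [hnseqdef]
      rw [dif_pos j.isLt]
    have hicard : (T'.image Fin.val).card = T'.card :=
      Finset.card_image_of_injective _ Fin.val_injective
    rw [himg]
    refine le_trans (aux_sum_finset_le nseq hnseq_anti _) (Finset.sum_le_sum_of_subset ?_)
    apply Finset.range_subset_range.mpr
    rw [hicard]
    exact le_min hT'g hT'k
  -- arithmetic combination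
  have hmM : m ≤ M := min_le_min (le_refl g) htk
  have hcheb : m * ∑ i ∈ Finset.range M, nseq i ≤ M * ∑ i ∈ Finset.range m, nseq i :=
    aux_cheb nseq hnseq_anti m M hmM
  have htM : t * M ≤ E.k * m := by
    rcases le_total E.k g with h | h
    · have hM : M = E.k := min_eq_right h
      have hm : m = t := min_eq_right (le_trans htk h)
      rw [hM, hm, Nat.mul_comm]
    · have hM : M = g := min_eq_left h
      rcases le_total t g with h2 | h2
      · have hm : m = t := min_eq_right h2
        rw [hM, hm, Nat.mul_comm]
        exact Nat.mul_le_mul_right t h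
      · have hm : m = g := min_eq_left h2
        rw [hM, hm]
        exact Nat.mul_le_mul_right g htk
  have hkey : t * ∑ i ∈ Finset.range M, nseq i ≤ E.k * ∑ i ∈ Finset.range m, nseq i := by
    rcases Nat.eq_zero_or_pos m with hm0 | hm0
    · have hM0 : M = 0 := by omega
      rw [hM0]
      simp
    · have h1 : m * (t * ∑ i ∈ Finset.range M, nseq i)
          ≤ m * (E.k * ∑ i ∈ Finset.range m, nseq i) := by
        calc m * (t * ∑ i ∈ Finset.range M, nseq i)
            = t * (m * ∑ i ∈ Finset.range M, nseq i) := by ring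
          _ ≤ t * (M * ∑ i ∈ Finset.range m, nseq i) := Nat.mul_le_mul_left t hcheb
          _ = (t * M) * ∑ i ∈ Finset.range m, nseq i := by ring
          _ ≤ (E.k * m) * ∑ i ∈ Finset.range m, nseq i := Nat.mul_le_mul_right _ htM
          _ = m * (E.k * ∑ i ∈ Finset.range m, nseq i) := by ring
      exact Nat.le_of_mul_le_mul_left h1 hm0
  have hfinal : t * sCC E Wmax ≤ E.k * sCC E W := by
    calc t * sCC E Wmax ≤ t * ∑ i ∈ Finset.range M, nseq i := Nat.mul_le_mul_left t hup
      _ ≤ E.k * ∑ i ∈ Finset.range m, nseq i := hkey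
      _ ≤ E.k * sCC E W := Nat.mul_le_mul_left _ hlow
  -- cast to ℚ
  have hkpos : (0 : ℚ) < (E.k : ℚ) := by exact_mod_cast hk1
  rw [div_mul_eq_mul_div, div_le_iff₀ hkpos]
  have hq : ((t * sCC E Wmax : ℕ) : ℚ) ≤ ((E.k * sCC E W : ℕ) : ℚ) := by exact_mod_cast hfinal
  push_cast at hq
  push_cast
  linarith
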